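/- Let n ≥ 1, a ≥ 0, p > 0, let Ω ⊂ ℝⁿ be a bounded open set, and let v : ℝⁿ → [0,∞) be a Lipschitz function with v ≡ 0 on ℝⁿ \ Ω. Then ∫_Ω |x|^a·v(x)^p·(x·∇v(x)) dx = −((n+a)/(p+1))·∫_Ω |x|^a·v(x)^{p+1} dx, where ∇v denotes the (almost everywhere defined) gradient of v and x·∇v(x) is the Euclidean inner product. -/

import Mathlib

open Real Set MeasureTheory Filter Topology
open scoped RealInnerProductSpace

private lemma rpow_abs_sub_le' {q M u w : ℝ} (hq : 1 ≤ q) (hu : u ∈ Icc 0 M) (hw : w ∈ Icc 0 M) :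
    |u ^ q - w ^ q| ≤ q * M ^ (q - 1) * |u - w| := by
  have h := Convex.norm_image_sub_le_of_norm_hasDerivWithin_le
    (f := fun x : ℝ => x ^ q) (f' := fun x : ℝ => q * x ^ (q - 1)) (s := Icc 0 M)
    (fun x _ => (Real.hasDerivAt_rpow_const (Or.inr hq)).hasDerivWithinAt)
    (fun x hx => by
      rw [Real.norm_eq_abs,
        abs_of_nonneg (mul_nonneg (by linarith) (Real.rpow_nonneg hx.1 _))]
      exact mul_le_mul_of_nonneg_left (Real.rpow_le_rpow hx.1 hx.2 (by linarith)) (by linarith))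
    (convex_Icc 0 M) hw hu
  simpa [Real.norm_eq_abs] using h

/-- The integration-by-parts identity
`∫_Ω |x|^a v^p (x·∇v) dx = -((n+a)/(p+1)) ∫_Ω |x|^a v^{p+1} dx`
for a nonnegative Lipschitz function `v` vanishing outside the bounded open set `Ω`. -/
theorem stmt_14 (n : ℕ) (hn : 1 ≤ n) (a p : ℝ) (ha : 0 ≤ a) (hp : 0 < p)
    (Ω : Set (EuclideanSpace ℝ (Fin n))) (hΩo : IsOpen Ω) (hΩb : Bornology.IsBounded Ω)
    (v : EuclideanSpace ℝ (Fin n) → ℝ) (K : NNReal) (hvLip : LipschitzWith K v)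
    (hvnn : ∀ x, 0 ≤ v x) (hv0 : ∀ x, x ∉ Ω → v x = 0) :
    ∫ x in Ω, ‖x‖ ^ a * v x ^ p * ⟪x, gradient v x⟫ =
      -((n + a) / (p + 1)) * ∫ x in Ω, ‖x‖ ^ a * v x ^ (p + 1) := by
  have hq : (1:ℝ) ≤ p + 1 := by linarith
  have hvcont : Continuous v := hvLip.continuous
  -- a radius containing Ω
  obtain ⟨r, hr⟩ := hΩb.subset_closedBall 0
  set R : ℝ := max r 1 with hRdef
  have hR0 : (0:ℝ) < R := lt_of_lt_of_le one_pos (le_max_right _ _)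
  have hΩR : Ω ⊆ Metric.closedBall 0 R :=
    hr.trans (Metric.closedBall_subset_closedBall (le_max_left _ _))
  have hnormΩ : ∀ x : EuclideanSpace ℝ (Fin n), x ∈ Ω → ‖x‖ ≤ R := fun x hx => by
    simpa using hΩR hx
  have hnotΩ : ∀ x : EuclideanSpace ℝ (Fin n), R < ‖x‖ → x ∉ Ω := fun x hx hmem => absurd (hnormΩ x hmem) (not_le.2 hx)
  -- uniform bound on v
  set M : ℝ := K * (3 * R + 1) with hMdef
  have hM0 : 0 ≤ M := mul_nonneg K.coe_nonneg (by linarith)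
  have hvM : ∀ x : EuclideanSpace ℝ (Fin n), v x ≤ M := by
    intro x
    by_cases hx : x ∈ Ω
    · set y : EuclideanSpace ℝ (Fin n) := (2 * R + 1) • (EuclideanSpace.single (⟨0, hn⟩ : Fin n) (1:ℝ)) with hy
      have hny : ‖y‖ = 2 * R + 1 := by
        rw [hy, norm_smul, EuclideanSpace.norm_single]
        simp [abs_of_nonneg (by linarith : (0:ℝ) ≤ 2 * R + 1)]
      have hyΩ : y ∉ Ω := hnotΩ y (by rw [hny]; linarith)
      have : dist (v x) (v y) ≤ K * dist x y := hvLip.dist_le_mul x y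
      rw [hv0 y hyΩ] at this
      have hd : dist x y ≤ 3 * R + 1 := by
        calc dist x y ≤ ‖x‖ + ‖y‖ := dist_le_norm_add_norm x y
        _ ≤ R + (2 * R + 1) := by
            have := hnormΩ x hx; rw [hny]; linarith
        _ = 3 * R + 1 := by ring
      have h1 : v x ≤ dist (v x) 0 := le_abs_self _ |>.trans_eq (by rw [Real.dist_eq, sub_zero])
      calc v x ≤ dist (v x) 0 := h1
      _ ≤ K * dist x y := this
      _ ≤ K * (3 * R + 1) := mul_le_mul_of_nonneg_left hd K.coe_nonneg
    · rw [hv0 x hx]; exact hM0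
  -- vanishing for scaled arguments
  have hvanish : ∀ (t : ℝ) (x : EuclideanSpace ℝ (Fin n)), 1/2 ≤ |t| → 2 * R < ‖x‖ → v (t • x) = 0 := by
    intro t x ht hx
    apply hv0
    apply hnotΩ
    rw [norm_smul, Real.norm_eq_abs]
    have h1 : (1/2 : ℝ) * ‖x‖ ≤ |t| * ‖x‖ := mul_le_mul_of_nonneg_right ht (norm_nonneg x)
    linarith
  -- the weight function
  set g : EuclideanSpace ℝ (Fin n) → ℝ := fun x => ‖x‖ ^ a * v x ^ (p + 1) with hgdef
  have hgc : Continuous g :=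
    (continuous_norm.rpow_const fun x => Or.inr ha).mul
      (hvcont.rpow_const fun x => Or.inr (by linarith))
  have hgsupp : ∀ x : EuclideanSpace ℝ (Fin n), x ∉ Metric.closedBall 0 R → g x = 0 := by
    intro x hx
    have : v x = 0 := hv0 x (fun h => hx (hΩR h))
    simp [hgdef, this, Real.zero_rpow (by linarith : p + 1 ≠ 0)]
  have hgint : Integrable g :=
    hgc.integrable_of_hasCompactSupport
      (HasCompactSupport.intro (isCompact_closedBall 0 R) hgsupp)
  -- the scaled family
  set G : ℝ → ℝ := fun t => ∫ x : EuclideanSpace ℝ (Fin n), ‖x‖ ^ a * v (t • x) ^ (p + 1) with hGdef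
  have hG1 : G 1 = ∫ x : EuclideanSpace ℝ (Fin n), g x := by
    simp only [hGdef, one_smul, hgdef]
  -- scaling identity
  have hscale : ∀ t : ℝ, 0 < t → G t = t ^ (-((n:ℝ) + a)) * G 1 := by
    intro t ht
    have hcomp : ∫ x : EuclideanSpace ℝ (Fin n), g (t • x) = (t ^ n)⁻¹ • ∫ x : EuclideanSpace ℝ (Fin n), g x := by
      have := MeasureTheory.Measure.integral_comp_smul (volume : Measure (EuclideanSpace ℝ (Fin n))) g t
      rwa [abs_of_nonneg (inv_nonneg.2 (pow_nonneg ht.le _)), finrank_euclideanSpace_fin] at this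
    have hpt : ∀ x : EuclideanSpace ℝ (Fin n), g (t • x) = t ^ a * (‖x‖ ^ a * v (t • x) ^ (p + 1)) := by
      intro x
      rw [hgdef]
      simp only
      rw [norm_smul, Real.norm_eq_abs, abs_of_nonneg ht.le,
        Real.mul_rpow ht.le (norm_nonneg x), mul_assoc]
    have h2 : ∫ x : EuclideanSpace ℝ (Fin n), g (t • x) = t ^ a * G t := by
      rw [hGdef]
      simp only
      rw [← MeasureTheory.integral_const_mul]
      exact integral_congr_ae (Filter.Eventually.of_forall fun x => hpt x)
    have hta : (0:ℝ) < t ^ a := Real.rpow_pos_of_pos ht a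
    have : t ^ a * G t = (t ^ n)⁻¹ * G 1 := by
      rw [← h2, hcomp, hG1, smul_eq_mul]
    have hGt : G t = (t ^ a)⁻¹ * ((t ^ n)⁻¹ * G 1) := by
      field_simp at this ⊢
      linarith [this]
    rw [hGt]
    rw [Real.rpow_neg ht.le, Real.rpow_add ht, Real.rpow_natCast]
    rw [mul_inv]
    ring
  -- derivative of G at 1 via the scaling identity
  have hGd1 : HasDerivAt G (-((n:ℝ) + a) * G 1) 1 := by
    have hd : HasDerivAt (fun t : ℝ => t ^ (-((n:ℝ) + a)) * G 1) (-((n:ℝ) + a) * G 1) 1 := by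
      have := (Real.hasDerivAt_rpow_const (x := (1:ℝ)) (p := -((n:ℝ) + a))
        (Or.inl one_ne_zero)).mul_const (G 1)
      simpa using this
    apply hd.congr_of_eventuallyEq
    filter_upwards [eventually_gt_nhds (zero_lt_one)] with t ht
    exact hscale t ht
  -- derivative of G at 1 via differentiation under the integral
  set F' : EuclideanSpace ℝ (Fin n) → ℝ := fun x => ‖x‖ ^ a * ((fderiv ℝ v x) x * (p + 1) * v x ^ p) with hF'def
  set C0 : ℝ := (2*R) ^ a * ((p+1) * M ^ p * (K * (2*R))) with hC0def
  have hC0 : 0 ≤ C0 := by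
    apply mul_nonneg (Real.rpow_nonneg (by linarith) a)
    apply mul_nonneg (mul_nonneg (by linarith) (Real.rpow_nonneg hM0 p))
    exact mul_nonneg K.coe_nonneg (by linarith)
  set bound : EuclideanSpace ℝ (Fin n) → ℝ := (Metric.closedBall (0:EuclideanSpace ℝ (Fin n)) (2*R)).indicator (fun _ => C0) with hbdef
  have key := hasDerivAt_integral_of_dominated_loc_of_lip
    (F := fun (t : ℝ) (x : EuclideanSpace ℝ (Fin n)) => ‖x‖ ^ a * v (t • x) ^ (p + 1)) (F' := F') (x₀ := (1:ℝ))
    (bound := bound) (μ := (volume : Measure (EuclideanSpace ℝ (Fin n)))) (s := Metric.ball (1:ℝ) (1/2)) (Metric.ball_mem_nhds _ (by norm_num))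
    (Filter.Eventually.of_forall fun t =>
      (((continuous_norm.rpow_const fun x => Or.inr ha).mul
        ((hvcont.comp (continuous_const_smul t)).rpow_const
          fun x => Or.inr (by linarith))).aestronglyMeasurable))
    (by simpa only [one_smul] using hgint)
    (by
      have m1 : Measurable fun x : EuclideanSpace ℝ (Fin n) => (fderiv ℝ v x) x := by
        have h1 : Measurable fun x : EuclideanSpace ℝ (Fin n) => ((fderiv ℝ v x, x) : (EuclideanSpace ℝ (Fin n) →L[ℝ] ℝ) × EuclideanSpace ℝ (Fin n)) :=
          (measurable_fderiv ℝ v).prodMk measurable_id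
        exact (isBoundedBilinearMap_apply.continuous.measurable).comp h1
      have m2 : Measurable F' := by
        apply ((continuous_norm.rpow_const fun x => Or.inr ha).measurable).mul
        exact (m1.mul measurable_const).mul
          ((hvcont.rpow_const fun x => Or.inr hp.le).measurable)
      exact m2.aestronglyMeasurable)
    (by
      apply Filter.Eventually.of_forall
      intro x
      by_cases hx : x ∈ Metric.closedBall (0:EuclideanSpace ℝ (Fin n)) (2*R)
      · -- Lipschitz with constant C0
        have hb : bound x = C0 := by rw [hbdef, Set.indicator_of_mem hx]
        apply LipschitzOnWith.of_dist_le_mul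
        intro s hs t ht
        have hxn : ‖x‖ ≤ 2 * R := by simpa using hx
        have hna : ‖x‖ ^ a ≤ (2*R) ^ a := Real.rpow_le_rpow (norm_nonneg x) hxn ha
        have hrp := rpow_abs_sub_le' (q := p+1) (M := M) hq
          ⟨hvnn _, hvM (s • x)⟩ ⟨hvnn _, hvM (t • x)⟩
        have hvv : |v (s • x) - v (t • x)| ≤ K * (‖x‖ * |s - t|) := by
          have h := hvLip.dist_le_mul (s • x) (t • x)
          rw [Real.dist_eq, dist_eq_norm, ← sub_smul, norm_smul, Real.norm_eq_abs] at h
          calc |v (s • x) - v (t • x)| ≤ (K : ℝ) * (|s - t| * ‖x‖) := h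
          _ = K * (‖x‖ * |s - t|) := by ring
        show |‖x‖ ^ a * v (s • x) ^ (p + 1) - ‖x‖ ^ a * v (t • x) ^ (p + 1)|
          ≤ (Real.nnabs (bound x) : ℝ) * dist s t
        rw [Real.dist_eq]
        have step1 : |‖x‖ ^ a * v (s • x) ^ (p+1) - ‖x‖ ^ a * v (t • x) ^ (p+1)|
            = ‖x‖ ^ a * |v (s • x) ^ (p+1) - v (t • x) ^ (p+1)| := by
          rw [← mul_sub, abs_mul, abs_of_nonneg (Real.rpow_nonneg (norm_nonneg x) a)]
        rw [step1]
        have hMp : (0:ℝ) ≤ (p+1) * M ^ (p+1-1) :=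
          mul_nonneg (by linarith) (Real.rpow_nonneg hM0 _)
        calc ‖x‖ ^ a * |v (s • x) ^ (p+1) - v (t • x) ^ (p+1)|
            ≤ ‖x‖ ^ a * ((p+1) * M ^ (p+1-1) * |v (s • x) - v (t • x)|) := by
              exact mul_le_mul_of_nonneg_left hrp (Real.rpow_nonneg (norm_nonneg x) a)
        _ ≤ ‖x‖ ^ a * ((p+1) * M ^ (p+1-1) * (K * (‖x‖ * |s - t|))) := by
              apply mul_le_mul_of_nonneg_left _ (Real.rpow_nonneg (norm_nonneg x) a)
              exact mul_le_mul_of_nonneg_left hvv hMp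
        _ ≤ (2*R) ^ a * ((p+1) * M ^ (p+1-1) * (K * ((2*R) * |s - t|))) := by
              apply mul_le_mul hna _ _ (Real.rpow_nonneg (by linarith) a)
              · apply mul_le_mul_of_nonneg_left _ hMp
                apply mul_le_mul_of_nonneg_left _ K.coe_nonneg
                exact mul_le_mul_of_nonneg_right hxn (abs_nonneg _)
              · apply mul_nonneg hMp
                exact mul_nonneg K.coe_nonneg (mul_nonneg (norm_nonneg x) (abs_nonneg _))
        _ = C0 * |s - t| := by
              rw [hC0def]
              simp only [add_sub_cancel_right]
              ring
        _ ≤ (Real.nnabs (bound x) : ℝ) * |s - t| := by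
              apply mul_le_mul_of_nonneg_right _ (abs_nonneg _)
              rw [hb]
              simp [Real.coe_nnabs, le_abs_self]
      · -- outside: the function is constantly zero on the ball
        have hxn : 2 * R < ‖x‖ := by
          by_contra h
          exact hx (by simpa using not_lt.1 h)
        apply LipschitzOnWith.of_dist_le_mul
        intro s hs t ht
        have hzero : ∀ u : ℝ, u ∈ Metric.ball (1:ℝ) (1/2) →
            ‖x‖ ^ a * v (u • x) ^ (p + 1) = 0 := by
          intro u hu
          have hu' : |u - 1| < 1/2 := by simpa [Real.dist_eq] using hu
          have : (1:ℝ)/2 ≤ |u| := by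
            rcases abs_sub_abs_le_abs_sub u 1 with h
            have h1 : |(1:ℝ)| = 1 := abs_one
            cases' abs_sub_lt_iff.1 hu' with h2 h3
            rcases le_or_gt 0 u with hu0 | hu0
            · rw [abs_of_nonneg hu0]; linarith [abs_of_nonneg hu0]
            · nlinarith [abs_of_neg hu0]
          rw [hvanish u x this hxn, Real.zero_rpow (by linarith : p + 1 ≠ 0), mul_zero]
        show dist (‖x‖ ^ a * v (s • x) ^ (p + 1)) (‖x‖ ^ a * v (t • x) ^ (p + 1))
          ≤ (Real.nnabs (bound x) : ℝ) * dist s t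
        rw [hzero s hs, hzero t ht]
        simp only [dist_self]
        positivity)
    (by
      rw [hbdef]
      rw [integrable_indicator_iff measurableSet_closedBall]
      exact integrableOn_const (measure_closedBall_lt_top).ne)
    (by
      filter_upwards [hvLip.ae_differentiableAt (μ := (volume : Measure (EuclideanSpace ℝ (Fin n))))] with x hx
      have hsm : HasDerivAt (fun t : ℝ => t • x) x 1 := by
        simpa using (hasDerivAt_id (1:ℝ)).smul_const x
      have hfx : HasFDerivAt v (fderiv ℝ v x) ((1:ℝ) • x) := by
        rw [one_smul]; exact hx.hasFDerivAt
      have hcomp : HasDerivAt (fun t : ℝ => v (t • x)) ((fderiv ℝ v x) x) 1 :=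
        hfx.comp_hasDerivAt 1 hsm
      have hpow := hcomp.rpow_const (p := p + 1) (Or.inr hq)
      have := hpow.const_mul (‖x‖ ^ a)
      simp only [one_smul, add_sub_cancel_right] at this
      exact this)
  obtain ⟨hF'int, hGd2⟩ := key
  have huniq : ∫ x : EuclideanSpace ℝ (Fin n), F' x = -((n:ℝ) + a) * G 1 := hGd2.unique hGd1
  -- rewrite the target
  have hinner : ∀ x : EuclideanSpace ℝ (Fin n), ⟪x, gradient v x⟫ = (fderiv ℝ v x) x := by
    intro x
    rw [real_inner_comm]
    exact InnerProductSpace.toDual_symm_apply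
  have hLHS : ∫ x in Ω, ‖x‖ ^ a * v x ^ p * ⟪x, gradient v x⟫
      = ∫ x : EuclideanSpace ℝ (Fin n), ‖x‖ ^ a * v x ^ p * (fderiv ℝ v x) x := by
    rw [MeasureTheory.setIntegral_eq_integral_of_forall_compl_eq_zero (fun x hx => by
      show ‖x‖ ^ a * v x ^ p * ⟪x, gradient v x⟫ = 0
      rw [hv0 x hx, Real.zero_rpow hp.ne', mul_zero, zero_mul])]
    exact integral_congr_ae (Filter.Eventually.of_forall fun x => by
      show ‖x‖ ^ a * v x ^ p * ⟪x, gradient v x⟫ = ‖x‖ ^ a * v x ^ p * (fderiv ℝ v x) x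
      rw [hinner x])
  have hRHS : ∫ x in Ω, ‖x‖ ^ a * v x ^ (p + 1) = G 1 := by
    rw [MeasureTheory.setIntegral_eq_integral_of_forall_compl_eq_zero (fun x hx => by
      show ‖x‖ ^ a * v x ^ (p + 1) = 0
      rw [hv0 x hx, Real.zero_rpow (by linarith : p + 1 ≠ 0), mul_zero]), hG1]
  have hF'eq : ∀ x : EuclideanSpace ℝ (Fin n), F' x = (p + 1) * (‖x‖ ^ a * v x ^ p * (fderiv ℝ v x) x) := by
    intro x; rw [hF'def]; ring
  have hsplit : ∫ x : EuclideanSpace ℝ (Fin n), F' x = (p + 1) * ∫ x : EuclideanSpace ℝ (Fin n), ‖x‖ ^ a * v x ^ p * (fderiv ℝ v x) x := by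
    rw [← MeasureTheory.integral_const_mul]
    exact integral_congr_ae (Filter.Eventually.of_forall fun x => hF'eq x)
  rw [hLHS, hRHS]
  have hp1 : p + 1 ≠ 0 := by linarith
  have : (p + 1) * ∫ x : EuclideanSpace ℝ (Fin n), ‖x‖ ^ a * v x ^ p * (fderiv ℝ v x) x = -((n:ℝ) + a) * G 1 := by
    rw [← hsplit]; exact huniq
  field_simp
  linarith [this]
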